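/- Let d ≥ 2 and 0 < r < R. Set C := (R^{d−1} + r^{d−1})/(R^d − r^d), define f : (0, ∞) → ℝ by f(t) := C − (C·r^d + r^{d−1})·t^{−d}, and define the vector field V : ℝ^d \ {0} → ℝ^d by V(x) := f(‖x‖)·x. Then V is smooth on ℝ^d \ {0} and its divergence satisfies div V(x) = f'(‖x‖)·‖x‖ + d·f(‖x‖) = d·C for every x ≠ 0; moreover ‖V(x)‖ < 1 for every x with r < ‖x‖ < R, and ‖V(x)‖ = 1 whenever ‖x‖ = r or ‖x‖ = R. -/

import Mathlib

open MeasureTheory Metric Set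

/-- The divergence of a vector field on `ℝ^d`, i.e. the trace of its Fréchet derivative. -/
noncomputable def divergence {d : ℕ} (V : EuclideanSpace ℝ (Fin d) → EuclideanSpace ℝ (Fin d))
    (x : EuclideanSpace ℝ (Fin d)) : ℝ :=
  LinearMap.trace ℝ _ (fderiv ℝ V x).toLinearMap

/-- A set `S ⊆ ℝ^d` has smooth boundary if near every boundary point it is the sublevel set
of a smooth function with nonvanishing gradient. -/
def HasSmoothBoundary {d : ℕ} (S : Set (EuclideanSpace ℝ (Fin d))) : Prop :=
  ∀ x ∈ frontier S, ∃ U : Set (EuclideanSpace ℝ (Fin d)), IsOpen U ∧ x ∈ U ∧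
    ∃ f : EuclideanSpace ℝ (Fin d) → ℝ, ContDiff ℝ (⊤ : ℕ∞) f ∧
      (∀ y ∈ U, fderiv ℝ f y ≠ 0) ∧ S ∩ U = {y | y ∈ U ∧ f y < 0}

/-- The Cheeger constant of `Ω ⊆ ℝ^d`: the infimum of `H^{d-1}(∂S) / λ(S)` over nonempty
bounded open subsets `S ⊆ Ω` with smooth boundary. -/
noncomputable def cheegerConstant {d : ℕ} (Ω : Set (EuclideanSpace ℝ (Fin d))) : ℝ :=
  sInf { h : ℝ | ∃ S : Set (EuclideanSpace ℝ (Fin d)), S.Nonempty ∧ IsOpen S ∧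
    Bornology.IsBounded S ∧ S ⊆ Ω ∧ HasSmoothBoundary S ∧
    h = (μH[(d : ℝ) - 1] (frontier S)).toReal / (volume S).toReal }

/-- The radial test vector field `V(x) = f(‖x‖) x` for the spherical shell: `V` is smooth
away from the origin, has constant divergence
`div V(x) = f'(‖x‖)‖x‖ + d f(‖x‖) = d C`, satisfies `‖V(x)‖ < 1` strictly inside the
shell and `‖V(x)‖ = 1` on its boundary spheres. -/

lemma aux_trace_smulRight {M : Type*} [AddCommGroup M] [Module ℝ M]
    [Module.Finite ℝ M] [Module.Free ℝ M] (l : M →ₗ[ℝ] ℝ) (v : M) :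
    LinearMap.trace ℝ M (LinearMap.smulRight l v) = l v := by
  classical
  let b := Module.Free.chooseBasis ℝ M
  rw [LinearMap.trace_eq_matrix_trace ℝ b, Matrix.trace]
  conv_rhs => rw [← b.sum_repr v, map_sum]
  simp [Matrix.diag, LinearMap.toMatrix_apply, mul_comm]

lemma aux_hasFDerivAt_norm {E : Type*} [NormedAddCommGroup E] [InnerProductSpace ℝ E]
    {x : E} (hx : x ≠ 0) :
    HasFDerivAt (fun y : E => ‖y‖) (‖x‖⁻¹ • (innerSL ℝ x)) x := by
  have hxn : ‖x‖ ≠ 0 := norm_ne_zero_iff.mpr hx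
  have h1 : HasFDerivAt (fun y : E => ‖y‖ ^ 2) (2 • (innerSL ℝ x)) x :=
    (hasStrictFDerivAt_norm_sq x).hasFDerivAt
  have h2 := h1.sqrt (pow_ne_zero 2 hxn)
  have e1 : (fun y : E => Real.sqrt (‖y‖ ^ 2)) = fun y : E => ‖y‖ := by
    funext y; exact Real.sqrt_sq (norm_nonneg y)
  rw [e1, Real.sqrt_sq (norm_nonneg x)] at h2
  convert h2 using 1
  ext y
  simp only [ContinuousLinearMap.coe_smul', Pi.smul_apply, ContinuousLinearMap.smul_apply,
    nsmul_eq_mul, smul_eq_mul]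
  field_simp
  ring


theorem radial_test_vector_field_of_shell
    (d : ℕ) (hd : 2 ≤ d) (r R : ℝ) (hr : 0 < r) (hrR : r < R)
    (C : ℝ) (hC : C = (R ^ (d - 1) + r ^ (d - 1)) / (R ^ d - r ^ d))
    (f : ℝ → ℝ) (hf : ∀ t : ℝ, f t = C - (C * r ^ d + r ^ (d - 1)) * t ^ (-(d : ℤ)))
    (V : EuclideanSpace ℝ (Fin d) → EuclideanSpace ℝ (Fin d))
    (hVdef : ∀ x, V x = f ‖x‖ • x) :
    ContDiffOn ℝ (⊤ : ℕ∞) V {x : EuclideanSpace ℝ (Fin d) | x ≠ 0} ∧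
    (∀ x : EuclideanSpace ℝ (Fin d), x ≠ 0 →
      divergence V x = deriv f ‖x‖ * ‖x‖ + (d : ℝ) * f ‖x‖ ∧ divergence V x = (d : ℝ) * C) ∧
    (∀ x : EuclideanSpace ℝ (Fin d), r < ‖x‖ → ‖x‖ < R → ‖V x‖ < 1) ∧
    (∀ x : EuclideanSpace ℝ (Fin d), ‖x‖ = r ∨ ‖x‖ = R → ‖V x‖ = 1) := by
  obtain ⟨e, rfl⟩ : ∃ e, d = e + 2 := ⟨d - 2, by omega⟩
  have h21 : e + 2 - 1 = e + 1 := rfl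
  rw [h21] at hC
  simp only [h21] at hf
  have hR : 0 < R := hr.trans hrR
  have hRd : (0:ℝ) < R ^ (e + 2) - r ^ (e + 2) :=
    sub_pos.mpr (pow_lt_pow_left₀ hrR hr.le (by omega))
  have hCpos : 0 < C := by
    rw [hC]; exact div_pos (by positivity) hRd
  set K : ℝ := C * r ^ (e + 2) + r ^ (e + 1) with hK
  have hKpos : 0 < K := by positivity
  have hzpow : ∀ t : ℝ, t ^ (-((e + 2 : ℕ) : ℤ)) = (t ^ (e + 2))⁻¹ := by
    intro t; rw [zpow_neg, zpow_natCast]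
  have hf' : ∀ t : ℝ, f t = C - K * (t ^ (e + 2))⁻¹ := by
    intro t; rw [hf t, hzpow t]
  -- boundary values
  have hfr : f r * r = -1 := by
    rw [hf', hK]
    have h1 : r ^ (e + 2) ≠ 0 := by positivity
    field_simp
    ring
  have hfR : f R * R = 1 := by
    rw [hf', hK, hC]
    have h1 : R ^ (e + 2) ≠ 0 := by positivity
    have h2 : R ^ (e + 2) - r ^ (e + 2) ≠ 0 := ne_of_gt hRd
    field_simp
    ring
  -- strict monotonicity of t ↦ f t * t
  have hmono : ∀ a b : ℝ, 0 < a → a < b → f a * a < f b * b := by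
    intro a b ha hab
    have hb : 0 < b := ha.trans hab
    have ha' : (a : ℝ) ^ (e + 2) ≠ 0 := by positivity
    have hb' : (b : ℝ) ^ (e + 2) ≠ 0 := by positivity
    have e1 : f a * a = C * a - K * (a ^ (e + 1))⁻¹ := by
      rw [hf']; field_simp; ring
    have e2 : f b * b = C * b - K * (b ^ (e + 1))⁻¹ := by
      rw [hf']; field_simp; ring
    rw [e1, e2]
    have h1 : C * a < C * b := mul_lt_mul_of_pos_left hab hCpos
    have h2 : K * (b ^ (e + 1))⁻¹ < K * (a ^ (e + 1))⁻¹ := by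
      apply mul_lt_mul_of_pos_left _ hKpos
      exact inv_strictAnti₀ (by positivity) (pow_lt_pow_left₀ hab ha.le (by omega))
    exact sub_lt_sub h1 h2
  have hVfun : V = fun y => f ‖y‖ • y := funext hVdef
  refine ⟨?_, ?_, ?_, ?_⟩
  · -- smoothness
    intro x hx
    have hx' : (x : EuclideanSpace ℝ (Fin (e + 2))) ≠ 0 := hx
    have hnx : ‖x‖ ≠ 0 := norm_ne_zero_iff.mpr hx'
    have hft : ContDiffAt ℝ (⊤ : ℕ∞) f ‖x‖ := by
      have h1 : ContDiffAt ℝ (⊤ : ℕ∞) (fun t : ℝ => C - K * (t ^ (e + 2))⁻¹) ‖x‖ :=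
        contDiffAt_const.sub (contDiffAt_const.mul
          ((contDiffAt_id.pow (e + 2)).inv (pow_ne_zero _ hnx)))
      have : f = fun t : ℝ => C - K * (t ^ (e + 2))⁻¹ := funext hf'
      rw [this]; exact h1
    have hnorm : ContDiffAt ℝ (⊤ : ℕ∞) (fun y : EuclideanSpace ℝ (Fin (e + 2)) => ‖y‖) x :=
      contDiffAt_norm ℝ hx'
    have : ContDiffAt ℝ (⊤ : ℕ∞) V x := by
      rw [hVfun]
      exact (hft.comp x hnorm).smul contDiffAt_id
    exact this.contDiffWithinAt
  · -- divergence
    intro x hx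
    have hnx : ‖x‖ ≠ 0 := norm_ne_zero_iff.mpr hx
    have htpos : 0 < ‖x‖ := norm_pos_iff.mpr hx
    set t := ‖x‖ with hts
    set m : ℤ := -((e + 2 : ℕ) : ℤ) with hm
    -- derivative of f
    have hfd : HasDerivAt f (-(K * ((m : ℝ) * t ^ (m - 1)))) t := by
      have h1 : HasDerivAt (fun s : ℝ => C - K * s ^ m)
          (-(K * ((m : ℝ) * t ^ (m - 1)))) t :=
        (((hasDerivAt_zpow m t (Or.inl hnx)).const_mul K).const_sub C)
      have : f = fun s : ℝ => C - K * s ^ m := funext hf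
      rw [this]; exact h1
    have hderiv : deriv f t = -(K * ((m : ℝ) * t ^ (m - 1))) := hfd.deriv
    -- Fréchet derivative of V
    have hnorm := aux_hasFDerivAt_norm hx
    have hcomp : HasFDerivAt (fun y : EuclideanSpace ℝ (Fin (e + 2)) => f ‖y‖)
        ((-(K * ((m : ℝ) * t ^ (m - 1)))) • (t⁻¹ • innerSL ℝ x)) x :=
      hfd.comp_hasFDerivAt x hnorm
    have hV : HasFDerivAt V
        (f t • ContinuousLinearMap.id ℝ (EuclideanSpace ℝ (Fin (e + 2))) +
          ((-(K * ((m : ℝ) * t ^ (m - 1)))) • (t⁻¹ • innerSL ℝ x)).smulRight x) x := by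
      rw [hVfun]
      exact hcomp.smul (hasFDerivAt_id x)
    -- compute the trace
    have hlin : (fderiv ℝ V x).toLinearMap =
        f t • LinearMap.id +
          LinearMap.smulRight
            ((-(K * ((m : ℝ) * t ^ (m - 1)))) • (t⁻¹ • innerSL ℝ x)).toLinearMap x := by
      rw [hV.fderiv]
      ext y i
      simp [ContinuousLinearMap.smulRight_apply, mul_assoc]
    have hdiv : divergence V x =
        f t * (e + 2 : ℕ) + (-(K * ((m : ℝ) * t ^ (m - 1)))) * (t⁻¹ * (t ^ 2)) := by
      rw [divergence, hlin, map_add, _root_.map_smul, LinearMap.trace_id, aux_trace_smulRight]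
      simp only [ContinuousLinearMap.coe_coe, ContinuousLinearMap.coe_smul', Pi.smul_apply,
        ContinuousLinearMap.smul_apply, innerSL_apply_apply, smul_eq_mul,
        finrank_euclideanSpace, Fintype.card_fin, real_inner_self_eq_norm_sq]
      rw [← hts]
    have htm : t ^ (m - 1) = (t ^ (e + 2))⁻¹ * t⁻¹ := by
      rw [zpow_sub_one₀ hnx, hm, hzpow]
    constructor
    · rw [hdiv, hderiv]
      have : t⁻¹ * t ^ 2 = t := by field_simp
      rw [this]
      push_cast
      ring
    · rw [hdiv, htm, hf' t, hm]
      have h1 : (t : ℝ) ^ (e + 2) ≠ 0 := pow_ne_zero _ hnx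
      push_cast
      field_simp
      ring
  · -- strict interior bound
    intro x h1 h2
    have htpos : 0 < ‖x‖ := hr.trans h1
    rw [hVdef, norm_smul, Real.norm_eq_abs]
    have : |f ‖x‖| * ‖x‖ = |f ‖x‖ * ‖x‖| := by
      rw [abs_mul, abs_of_pos htpos]
    rw [this]
    rw [abs_lt]
    constructor
    · have := hmono r ‖x‖ hr h1
      linarith [hfr]
    · have := hmono ‖x‖ R htpos h2
      linarith [hfR]
  · -- boundary values
    intro x hx
    rcases hx with h | h
    · rw [hVdef, norm_smul, Real.norm_eq_abs, h]
      calc |f r| * r = |f r * r| := by rw [abs_mul, abs_of_pos hr]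
        _ = 1 := by rw [hfr]; norm_num
    · rw [hVdef, norm_smul, Real.norm_eq_abs, h]
      calc |f R| * R = |f R * R| := by rw [abs_mul, abs_of_pos hR]
        _ = 1 := by rw [hfR]; norm_num
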